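/- Let M be a torsion-free module over an integral domain R and let M_Q = M ⊗_R Frac(R) be its localization at R \ {0}. The natural map M → M_Q induces a bijection between the projective space ℙ(M) and ℙ(M_Q), where ℙ denotes the quotient of the nonzero elements by the equivalence relation generated by the common-divisor relation. -/
import Mathlib

/-- The common-divisor relation on nonzero elements of a module. -/
def relCD (R : Type*) {M : Type*} [CommSemiring R] [AddCommMonoid M] [Module R M]
    (x y : {m : M // m ≠ 0}) : Prop :=
  ∃ (m : M) (r s : R), (x : M) = r • m ∧ (y : M) = s • m

/-- The projective space of a module: nonzero elements modulo the equivalence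
relation generated by the common-divisor relation. -/
def ProjSp (R : Type*) (M : Type*) [CommSemiring R] [AddCommMonoid M] [Module R M] :=
  Quot (relCD R (M := M))

section aux

variable {R M : Type*} [CommRing R] [IsDomain R] [AddCommGroup M] [Module R M]
    [NoZeroSMulDivisors R M]

open LocalizedModule

lemma aux_inj : Function.Injective (mkLinearMap (nonZeroDivisors R) M) := by
  intro a b h
  simp only [mkLinearMap_apply, mk_eq, one_smul] at h
  obtain ⟨u, hu⟩ := h
  rw [Submonoid.smul_def, Submonoid.smul_def] at hu
  exact smul_right_injective M (nonZeroDivisors.coe_ne_zero u) hu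

lemma aux_ne {m : M} (hm : m ≠ 0) : mkLinearMap (nonZeroDivisors R) M m ≠ 0 :=
  fun h => hm (aux_inj (by simpa using h))

noncomputable def Fhat : ProjSp R M →
    ProjSp (Localization (nonZeroDivisors R)) (LocalizedModule (nonZeroDivisors R) M) :=
  Quot.lift
    (fun x => Quot.mk _ ⟨mkLinearMap (nonZeroDivisors R) M x.1, aux_ne x.2⟩)
    (by
      rintro x y ⟨n, r, s, hx, hy⟩
      apply Quot.sound
      refine ⟨mkLinearMap (nonZeroDivisors R) M n,
        algebraMap R (Localization (nonZeroDivisors R)) r,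
        algebraMap R (Localization (nonZeroDivisors R)) s, ?_, ?_⟩
      · show mkLinearMap (nonZeroDivisors R) M (x : M) = _
        rw [hx, map_smul, algebraMap_smul]
      · show mkLinearMap (nonZeroDivisors R) M (y : M) = _
        rw [hy, map_smul, algebraMap_smul])

end aux

theorem stmt_6 {R M : Type*} [CommRing R] [IsDomain R] [AddCommGroup M] [Module R M]
    [NoZeroSMulDivisors R M] :
    ∃ F : ProjSp R M → ProjSp (Localization (nonZeroDivisors R))
        (LocalizedModule (nonZeroDivisors R) M),
      Function.Bijective F ∧
      ∀ (m : M) (hm : m ≠ 0)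
        (hm' : LocalizedModule.mkLinearMap (nonZeroDivisors R) M m ≠ 0),
        F (Quot.mk _ ⟨m, hm⟩) =
          Quot.mk _ ⟨LocalizedModule.mkLinearMap (nonZeroDivisors R) M m, hm'⟩ := by
  classical
  set S := nonZeroDivisors R
  refine ⟨Fhat, ⟨?_, ?_⟩, fun m hm hm' => rfl⟩
  · -- injective
    intro a b hab
    induction a using Quot.ind with | _ x =>
    induction b using Quot.ind with | _ y =>
    obtain ⟨m, hm⟩ := x
    obtain ⟨m', hm'⟩ := y
    -- from hab, extract EqvGen over the localization
    have h1 := Quot.eqvGen_exact hab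
    -- relCD over a field implies scalar multiple
    set Q := Localization S
    set MQ := LocalizedModule S M
    have step : ∀ x y : {v : MQ // v ≠ 0}, relCD Q x y →
        ∃ q : Q, (y : MQ) = q • (x : MQ) := by
      rintro x y ⟨n, r, s, hx, hy⟩
      have hr : r ≠ 0 := by rintro rfl; exact x.2 (by simpa using hx)
      exact ⟨s * r⁻¹, by rw [hx, hy, smul_smul, mul_assoc, inv_mul_cancel₀ hr, mul_one]⟩
    have key : ∀ x y : {v : MQ // v ≠ 0}, Relation.EqvGen (relCD Q) x y →
        ∃ q : Q, q ≠ 0 ∧ (y : MQ) = q • (x : MQ) := by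
      intro x y h
      induction h with
      | rel x y h =>
          obtain ⟨q, hq⟩ := step x y h
          refine ⟨q, ?_, hq⟩
          rintro rfl
          exact y.2 (by simpa using hq)
      | refl x => exact ⟨1, one_ne_zero, (one_smul _ _).symm⟩
      | symm x y h ih =>
          obtain ⟨q, hq, he⟩ := ih
          exact ⟨q⁻¹, inv_ne_zero hq,
            by rw [he, smul_smul, inv_mul_cancel₀ hq, one_smul]⟩
      | trans x y z h1 h2 ih1 ih2 =>
          obtain ⟨q1, hq1, he1⟩ := ih1
          obtain ⟨q2, hq2, he2⟩ := ih2
          exact ⟨q2 * q1, mul_ne_zero hq2 hq1, by rw [he2, he1, smul_smul]⟩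
    obtain ⟨q, hq, he⟩ := key _ _ h1
    -- q = Localization.mk a b
    obtain ⟨⟨a, b⟩, rfl⟩ : ∃ p : R × S, Localization.mk p.1 p.2 = q := by
      induction q using Localization.ind with | _ p => exact ⟨p, rfl⟩
    simp only [LocalizedModule.mkLinearMap_apply] at he
    rw [LocalizedModule.mk_smul_mk, mul_one, LocalizedModule.mk_eq] at he
    obtain ⟨u, hu⟩ := he
    simp only [Submonoid.smul_def, one_smul, smul_smul] at hu
    -- hu : (u * b) • m' = (u * a) • m  (roughly)
    set w : M := ((u : R) * (b : R)) • m' with hw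
    have hwne : w ≠ 0 := smul_ne_zero
      (mul_ne_zero (nonZeroDivisors.coe_ne_zero u) (nonZeroDivisors.coe_ne_zero b)) hm'
    have e1 : Quot.mk (relCD R) (⟨m', hm'⟩ : {v : M // v ≠ 0}) = Quot.mk _ ⟨w, hwne⟩ :=
      Quot.sound ⟨m', 1, (u : R) * (b : R), (one_smul _ _).symm, rfl⟩
    have e2 : Quot.mk (relCD R) (⟨m, hm⟩ : {v : M // v ≠ 0}) = Quot.mk _ ⟨w, hwne⟩ :=
      Quot.sound ⟨m, 1, (u : R) * a, (one_smul _ _).symm, hu⟩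
    rw [e1, e2]
  · -- surjective
    intro z
    induction z using Quot.ind with | _ y =>
    obtain ⟨v, hv⟩ := y
    induction v using LocalizedModule.induction_on with | _ m s =>
    have hm : m ≠ 0 := by rintro rfl; exact hv (LocalizedModule.zero_mk s)
    refine ⟨Quot.mk _ ⟨m, hm⟩, ?_⟩
    show Quot.mk _ (⟨LocalizedModule.mkLinearMap S M m, aux_ne hm⟩ :
      {v : LocalizedModule S M // v ≠ 0}) = _
    apply Quot.sound
    refine ⟨LocalizedModule.mk m 1, 1, Localization.mk 1 s, (one_smul _ _).symm, ?_⟩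
    rw [LocalizedModule.mk_smul_mk, one_smul, mul_one]
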